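/- Let F be a polynomial over ℂ of degree m ≥ 2 that is pre-simple, i.e., F has exactly m−1 distinct critical values in ℂ. Then F is indecomposable: if F = f₁ ∘ f₂ for rational maps f₁, f₂, then deg f₁ = 1 or deg f₂ = 1. -/

import Mathlib

open Polynomial

/-- Degree of a rational map, as max of degrees of numerator and denominator. -/
noncomputable def ratDeg (f : RatFunc ℂ) : ℕ := max f.num.natDegree f.denom.natDegree

/-- Composition of rational maps: `f ∘ g` obtained by substituting `g` into
numerator and denominator of `f`. -/
noncomputable def ratComp (f g : RatFunc ℂ) : RatFunc ℂ :=
  Polynomial.aeval g f.num / Polynomial.aeval g f.denom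

/-- The set of (finite) critical values of a polynomial over ℂ. -/
def critVals (F : Polynomial ℂ) : Set ℂ :=
  {v : ℂ | ∃ c : ℂ, (Polynomial.derivative F).eval c = 0 ∧ F.eval c = v}

section PreSimpleAux

/-- Homogenization-substitution: `∑ i ≤ N, p_i r^i s^(N-i)`. -/
noncomputable def phom (p r s : Polynomial ℂ) (N : ℕ) : Polynomial ℂ :=
  ∑ i ∈ Finset.range (N+1), C (p.coeff i) * r^i * s^(N-i)

lemma coprime_eval {p q : Polynomial ℂ} (h : IsCoprime p q) {w : ℂ}
    (hq : q.eval w = 0) : p.eval w ≠ 0 := by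
  obtain ⟨u, v, huv⟩ := h
  intro hp
  have := congrArg (Polynomial.eval w) huv
  simp [hp, hq] at this

lemma algebraMap_phom (p r s : Polynomial ℂ) (hs : s ≠ 0) (N : ℕ) (hN : p.natDegree < N + 1) :
    Polynomial.aeval ((algebraMap (Polynomial ℂ) (RatFunc ℂ) r)
        / algebraMap (Polynomial ℂ) (RatFunc ℂ) s) p
      * (algebraMap (Polynomial ℂ) (RatFunc ℂ) s) ^ N
    = algebraMap (Polynomial ℂ) (RatFunc ℂ) (phom p r s N) := by
  set A := algebraMap (Polynomial ℂ) (RatFunc ℂ)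
  have hs' : A s ≠ 0 := RatFunc.algebraMap_ne_zero hs
  rw [Polynomial.aeval_eq_sum_range' hN, phom, map_sum, Finset.sum_mul]
  refine Finset.sum_congr rfl fun i hi => ?_
  rw [Finset.mem_range, Nat.lt_succ_iff] at hi
  have hpow : A s ^ i * A s ^ (N - i) = A s ^ N := by
    rw [← pow_add]; congr 1; omega
  have key : (A r / A s) ^ i * A s ^ N = A r ^ i * A s ^ (N - i) := by
    rw [div_pow, div_mul_eq_mul_div, div_eq_iff (pow_ne_zero _ hs'),
      mul_assoc, mul_comm (A s ^ (N - i)), hpow]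
  rw [smul_mul_assoc, key, map_mul, map_mul, map_pow, map_pow, Algebra.smul_def]
  rw [IsScalarTower.algebraMap_apply ℂ (Polynomial ℂ) (RatFunc ℂ)]
  rw [Polynomial.algebraMap_eq, mul_assoc]

lemma phom_eval_sroot (p r s : Polynomial ℂ) (N : ℕ) {α : ℂ} (hα : s.eval α = 0) :
    (phom p r s N).eval α = p.coeff N * r.eval α ^ N := by
  rw [phom, eval_finset_sum]
  rw [Finset.sum_eq_single N]
  · simp
  · intro i hi hne
    rw [Finset.mem_range, Nat.lt_succ_iff] at hi
    have : N - i ≠ 0 := by omega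
    simp [hα, zero_pow this]
  · intro h
    exact absurd (Finset.self_mem_range_succ N) h

lemma phom_eval_prop (p r s : Polynomial ℂ) (N : ℕ) (hN : p.natDegree < N + 1) {α w : ℂ}
    (hα : r.eval α = w * s.eval α) :
    (phom p r s N).eval α = p.eval w * s.eval α ^ N := by
  rw [phom, eval_finset_sum]
  have : ∀ i ∈ Finset.range (N+1),
      (C (p.coeff i) * r^i * s^(N-i)).eval α = (p.coeff i * w ^ i) * s.eval α ^ N := by
    intro i hi
    rw [Finset.mem_range, Nat.lt_succ_iff] at hi
    have hpow : s.eval α ^ i * s.eval α ^ (N - i) = s.eval α ^ N := by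
      rw [← pow_add]; congr 1; omega
    rw [eval_mul, eval_mul, eval_C, eval_pow, eval_pow, hα, mul_pow, ← hpow]
    ring
  rw [Finset.sum_congr rfl this, ← Finset.sum_mul, eval_eq_sum_range' hN]

lemma coeff_linear_pow (u v : ℂ) (n : ℕ) : ((C u * X + C v) ^ n).coeff n = u ^ n := by
  induction n with
  | zero => simp
  | succ n ih =>
    have hdeg : ((C u * X + C v) ^ n).natDegree ≤ n := by
      refine le_trans natDegree_pow_le ?_
      calc n * (C u * X + C v).natDegree ≤ n * 1 := by
            exact Nat.mul_le_mul_left n natDegree_linear_le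
        _ = n := mul_one n
    rw [pow_succ, mul_add, coeff_add]
    have h1 : ((C u * X + C v) ^ n * (C u * X)).coeff (n + 1) = u ^ n * u := by
      rw [← mul_assoc, coeff_mul_X, coeff_mul_C, ih]
    have h2 : ((C u * X + C v) ^ n * C v).coeff (n + 1) = 0 := by
      rw [coeff_mul_C, coeff_eq_zero_of_natDegree_lt (by omega), zero_mul]
    rw [h1, h2, add_zero, pow_succ]

lemma image_root_ncard_le (p : Polynomial ℂ) (hp : p ≠ 0) (f : ℂ → ℂ) :
    (f '' {x | p.eval x = 0}).ncard ≤ p.natDegree := by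
  have hset : {x : ℂ | p.eval x = 0} = (p.roots.toFinset : Set ℂ) := by
    ext x
    simp [Polynomial.mem_roots, hp, Polynomial.IsRoot]
  rw [hset]
  calc (f '' (p.roots.toFinset : Set ℂ)).ncard
      ≤ (p.roots.toFinset : Set ℂ).ncard := Set.ncard_image_le (Set.toFinite _)
    _ = p.roots.toFinset.card := Set.ncard_coe_finset _
    _ ≤ Multiset.card p.roots := p.roots.toFinset_card_le
    _ ≤ p.natDegree := p.card_roots'

lemma root_set_finite (p : Polynomial ℂ) (hp : p ≠ 0) : {x : ℂ | p.eval x = 0}.Finite := by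
  have hset : {x : ℂ | p.eval x = 0} = (p.roots.toFinset : Set ℂ) := by
    ext x
    simp [Polynomial.mem_roots, hp, Polynomial.IsRoot]
  rw [hset]; exact Set.toFinite _

lemma crit_count (h g : Polynomial ℂ) (hh : 2 ≤ h.natDegree) (hg : 2 ≤ g.natDegree) :
    (critVals (h.comp g)).ncard < (h.comp g).natDegree - 1 := by
  have hcompdeg : (h.comp g).natDegree = h.natDegree * g.natDegree := natDegree_comp
  have hh0 : h ≠ 0 := fun e => by simp [e] at hh
  have hg0 : g ≠ 0 := fun e => by simp [e] at hg
  have hdh : derivative h ≠ 0 := fun e => by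
    have := natDegree_eq_zero_of_derivative_eq_zero e; omega
  have hdg : derivative g ≠ 0 := fun e => by
    have := natDegree_eq_zero_of_derivative_eq_zero e; omega
  set S1 : Set ℂ := (fun β => h.eval β) '' {β | (derivative h).eval β = 0} with hS1
  set S2 : Set ℂ := (fun c => (h.comp g).eval c) '' {c | (derivative g).eval c = 0} with hS2
  have hsub : critVals (h.comp g) ⊆ S1 ∪ S2 := by
    rintro v ⟨c, hc, rfl⟩
    rw [derivative_comp, eval_mul, eval_comp] at hc
    rcases mul_eq_zero.mp hc with h1 | h2
    · right; exact ⟨c, h1, rfl⟩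
    · left; exact ⟨g.eval c, h2, by rw [eval_comp]⟩
  have hS1fin : S1.Finite := (root_set_finite _ hdh).image _
  have hS2fin : S2.Finite := (root_set_finite _ hdg).image _
  have hc1 : S1.ncard ≤ h.natDegree - 1 :=
    le_trans (image_root_ncard_le _ hdh _) (natDegree_derivative_le h)
  have hc2 : S2.ncard ≤ g.natDegree - 1 :=
    le_trans (image_root_ncard_le _ hdg _) (natDegree_derivative_le g)
  have hle : (critVals (h.comp g)).ncard ≤ S1.ncard + S2.ncard :=
    le_trans (Set.ncard_le_ncard hsub (hS1fin.union hS2fin)) (Set.ncard_union_le _ _)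
  have hmul : h.natDegree + g.natDegree ≤ h.natDegree * g.natDegree :=
    Nat.add_le_mul hh hg
  omega

end PreSimpleAux

/-- A pre-simple polynomial of degree `m ≥ 2` is indecomposable as a rational map. -/
theorem stmt0 (m : ℕ) (hm : 2 ≤ m) (F : Polynomial ℂ) (hdeg : F.natDegree = m)
    (hps : (critVals F).ncard = m - 1)
    (f₁ f₂ : RatFunc ℂ)
    (hcomp : algebraMap (Polynomial ℂ) (RatFunc ℂ) F = ratComp f₁ f₂) :
    ratDeg f₁ = 1 ∨ ratDeg f₂ = 1 := by
  by_contra hcon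
  push_neg at hcon
  obtain ⟨ha1, hb1⟩ := hcon
  set A := algebraMap (Polynomial ℂ) (RatFunc ℂ) with hA
  set p := f₁.num with hp
  set q := f₁.denom with hq
  set r := f₂.num with hr
  set s := f₂.denom with hs
  set a := ratDeg f₁ with haa
  set b := ratDeg f₂ with hbb
  have hqm : q.Monic := by rw [hq]; exact RatFunc.monic_denom f₁
  have hsm : s.Monic := by rw [hs]; exact RatFunc.monic_denom f₂
  have hq0 : q ≠ 0 := hqm.ne_zero
  have hs0 : s ≠ 0 := hsm.ne_zero
  have hcopq : IsCoprime p q := by rw [hp, hq]; exact RatFunc.isCoprime_num_denom f₁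
  have hcoprs : IsCoprime r s := by rw [hr, hs]; exact RatFunc.isCoprime_num_denom f₂
  have hf₂ : A r / A s = f₂ := by rw [hr, hs, hA]; exact RatFunc.num_div_denom f₂
  have hamax : a = max p.natDegree q.natDegree := haa
  have hbmax : b = max r.natDegree s.natDegree := hbb
  have hpa : p.natDegree ≤ a := by rw [hamax]; exact le_max_left _ _
  have hqa : q.natDegree ≤ a := by rw [hamax]; exact le_max_right _ _
  have hF0 : F ≠ 0 := by
    intro e; rw [e, natDegree_zero] at hdeg; omega
  have hAinj : Function.Injective A := RatFunc.algebraMap_injective ℂ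
  have hCmap : ∀ x : ℂ, algebraMap ℂ (RatFunc ℂ) x = A (C x) := fun x => by
    rw [IsScalarTower.algebraMap_apply ℂ (Polynomial ℂ) (RatFunc ℂ), Polynomial.algebraMap_eq]
  simp only [ratComp] at hcomp
  have hqaev : Polynomial.aeval f₂ q ≠ 0 := by
    intro e
    rw [← hq] at hcomp
    rw [e, div_zero] at hcomp
    exact hF0 (hAinj (by rw [hcomp, map_zero]))
  have key : A F * Polynomial.aeval f₂ q = Polynomial.aeval f₂ p := by
    rw [← hq, ← hp] at hcomp
    rw [hcomp, div_mul_cancel₀ _ hqaev]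
  have hp0 : p ≠ 0 := by
    intro e
    rw [e, map_zero] at key
    exact hF0 (hAinj (by
      rw [map_zero]
      rcases mul_eq_zero.mp key with h | h
      · exact h
      · exact absurd h hqaev))
  -- helper : F cannot equal a "constant" relation
  have hconst : ∀ u v : ℂ, v ≠ 0 → A F * A (C v) = A (C u) → False := by
    intro u v hv h
    have : F * C v = C u := hAinj (by rw [map_mul]; exact h)
    have hd := congrArg natDegree this
    rw [natDegree_mul_C hv, natDegree_C, hdeg] at hd
    omega
  have ha2 : 2 ≤ a := by
    rcases Nat.lt_or_ge a 2 with h | h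
    · exfalso
      have ha0 : a = 0 := by omega
      have hmax : max p.natDegree q.natDegree = 0 := by rw [← hamax]; exact ha0
      obtain ⟨hdp, hdq⟩ := Nat.max_eq_zero_iff.mp hmax
      have hpc : p = C (p.coeff 0) := eq_C_of_natDegree_eq_zero hdp
      have hqc : q = C (q.coeff 0) := eq_C_of_natDegree_eq_zero hdq
      have hqc0 : q.coeff 0 ≠ 0 := by
        intro e; apply hq0; rw [hqc, e, map_zero]
      have haq : Polynomial.aeval f₂ q = algebraMap ℂ (RatFunc ℂ) (q.coeff 0) := by
        conv_lhs => rw [hqc]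
        rw [aeval_C]
      have hap : Polynomial.aeval f₂ p = algebraMap ℂ (RatFunc ℂ) (p.coeff 0) := by
        conv_lhs => rw [hpc]
        rw [aeval_C]
      apply hconst (p.coeff 0) (q.coeff 0) hqc0
      rw [← hCmap, ← hCmap, ← haq, ← hap]
      exact key
    · exact h
  have hb2 : 2 ≤ b := by
    rcases Nat.lt_or_ge b 2 with h | h
    · exfalso
      have hb0 : b = 0 := by omega
      have hmax : max r.natDegree s.natDegree = 0 := by rw [← hbmax]; exact hb0
      obtain ⟨hdr, hds⟩ := Nat.max_eq_zero_iff.mp hmax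
      have hs1 : s = 1 := hsm.natDegree_eq_zero.mp hds
      have hrc : r = C (r.coeff 0) := eq_C_of_natDegree_eq_zero hdr
      have hf₂' : f₂ = A (C (r.coeff 0)) := by
        rw [← hf₂, hs1, map_one, div_one, ← hrc]
      have haev : ∀ t : Polynomial ℂ, Polynomial.aeval f₂ t
          = algebraMap ℂ (RatFunc ℂ) (t.eval (r.coeff 0)) := by
        intro t
        rw [hf₂', hCmap]
        have := Polynomial.aeval_algHom_apply
          (IsScalarTower.toAlgHom ℂ (Polynomial ℂ) (RatFunc ℂ)) (C (r.coeff 0)) t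
        simp only [IsScalarTower.coe_toAlgHom'] at this
        rw [← comp_eq_aeval, comp_C] at this
        exact this
      have hqv : q.eval (r.coeff 0) ≠ 0 := by
        intro e; apply hqaev; rw [haev, e, map_zero]
      apply hconst (p.eval (r.coeff 0)) (q.eval (r.coeff 0)) hqv
      rw [← hCmap, ← hCmap, ← haev, ← haev]
      exact key
    · exact h
  -- main case split on the denominator of f₂
  rcases Nat.eq_zero_or_pos s.natDegree with hds | hds
  · -- s is constant: f₂ is a polynomial
    have hs1 : s = 1 := hsm.natDegree_eq_zero.mp hds
    have hf₂' : f₂ = A r := by rw [← hf₂, hs1, map_one, div_one]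
    have haev : ∀ t : Polynomial ℂ, Polynomial.aeval f₂ t = A (t.comp r) := by
      intro t
      rw [hf₂', comp_eq_aeval]
      have := Polynomial.aeval_algHom_apply
        (IsScalarTower.toAlgHom ℂ (Polynomial ℂ) (RatFunc ℂ)) r t
      simp only [IsScalarTower.coe_toAlgHom'] at this
      exact this
    have hbr : b = r.natDegree := by
      rw [hbmax, hs1, natDegree_one, Nat.max_zero]
    have key' : F * q.comp r = p.comp r := by
      apply hAinj
      rw [map_mul, ← haev, ← haev]
      exact key
    have hdq0 : q.natDegree = 0 := by
      by_contra hne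
      obtain ⟨w, hw⟩ := Complex.exists_root
        (f := q) (natDegree_pos_iff_degree_pos.mp (Nat.pos_of_ne_zero hne))
      have hrw : 0 < (r - C w).degree := by
        rw [← natDegree_pos_iff_degree_pos, natDegree_sub_C]
        omega
      obtain ⟨x₀, hx₀⟩ := Complex.exists_root hrw
      have hrx₀ : r.eval x₀ = w := by
        have := hx₀
        rw [IsRoot, eval_sub, eval_C, sub_eq_zero] at this
        exact this
      have := congrArg (Polynomial.eval x₀) key'
      rw [eval_mul, eval_comp, eval_comp, hrx₀] at this
      rw [hw, mul_zero] at this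
      exact coprime_eval hcopq hw this.symm
    have hq1 : q = 1 := hqm.natDegree_eq_zero.mp hdq0
    have hFus : F = p.comp r := by
      rw [← key', hq1, one_comp, mul_one]
    have hap : a = p.natDegree := by
      rw [hamax, hq1, natDegree_one, Nat.max_zero]
    have hcc := crit_count p r (by omega) (by omega)
    rw [← hFus, hdeg, hps] at hcc
    omega
  · -- s nonconstant
    have hNp : p.natDegree < a + 1 := by omega
    have hNq : q.natDegree < a + 1 := by omega
    have h1 := algebraMap_phom p r s hs0 a hNp
    have h2 := algebraMap_phom q r s hs0 a hNq
    rw [← hA, hf₂] at h1 h2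
    have keyP : F * phom q r s a = phom p r s a := by
      apply hAinj
      rw [map_mul, ← h1, ← h2, ← mul_assoc, key]
    obtain ⟨α, hα⟩ := Complex.exists_root
      (f := s) (natDegree_pos_iff_degree_pos.mp hds)
    have hrα : r.eval α ≠ 0 := coprime_eval hcoprs hα
    have hdq : q.natDegree = a := by
      by_contra hne
      have hlt : q.natDegree < a := by omega
      have hqca : q.coeff a = 0 := coeff_eq_zero_of_natDegree_lt hlt
      have := congrArg (Polynomial.eval α) keyP
      rw [eval_mul, phom_eval_sroot q r s a hα, phom_eval_sroot p r s a hα, hqca,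
        zero_mul, mul_zero] at this
      have hpca : p.coeff a = 0 := by
        rcases mul_eq_zero.mp this.symm with h | h
        · exact h
        · exact absurd h (pow_ne_zero _ hrα)
      have hdp : p.natDegree = a := by
        rcases max_choice p.natDegree q.natDegree with h | h
        · rw [hamax, h]
        · exfalso
          have : a = q.natDegree := by rw [hamax, h]
          omega
      rw [← hdp] at hpca
      exact (leadingCoeff_ne_zero.mpr hp0) hpca
    have hroot : ∀ w : ℂ, q.eval w = 0 →
        r - C w * s = C ((r - C w * s).coeff 0) ∧ (r - C w * s).coeff 0 ≠ 0 := by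
      intro w hw
      have hu0 : r - C w * s ≠ 0 := by
        intro e
        have hdvd : s ∣ r := ⟨C w, by rw [sub_eq_zero] at e; rw [e]; ring⟩
        have := natDegree_eq_zero_of_isUnit (hcoprs.isUnit_of_dvd' hdvd dvd_rfl)
        omega
      have hud : (r - C w * s).natDegree = 0 := by
        by_contra hne
        obtain ⟨α₀, hα₀⟩ := Complex.exists_root
          (f := r - C w * s) (natDegree_pos_iff_degree_pos.mp (Nat.pos_of_ne_zero hne))
        have hru : r.eval α₀ = w * s.eval α₀ := by
          have := hα₀
          rw [IsRoot, eval_sub, eval_mul, eval_C, sub_eq_zero] at this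
          exact this
        have := congrArg (Polynomial.eval α₀) keyP
        rw [eval_mul, phom_eval_prop q r s a hNq hru, phom_eval_prop p r s a hNp hru,
          hw, zero_mul, mul_zero] at this
        have hsα₀ : s.eval α₀ ≠ 0 := by
          intro e
          apply coprime_eval hcoprs e
          rw [hru, e, mul_zero]
        have hpw : p.eval w = 0 := by
          rcases mul_eq_zero.mp this.symm with h | h
          · exact h
          · exact absurd h (pow_ne_zero _ hsα₀)
        exact coprime_eval hcopq hw hpw
      exact ⟨eq_C_of_natDegree_eq_zero hud, by
        intro e
        apply hu0
        rw [eq_C_of_natDegree_eq_zero hud, e, map_zero]⟩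
    have hdqpos : 0 < q.degree := by
      rw [← natDegree_pos_iff_degree_pos]; omega
    obtain ⟨w, hw⟩ := Complex.exists_root hdqpos
    obtain ⟨hcw, hc0⟩ := hroot w hw
    set c := (r - C w * s).coeff 0 with hcdef
    have huniq : ∀ w' : ℂ, q.eval w' = 0 → w' = w := by
      intro w' hw'
      by_contra hne
      obtain ⟨hcw', _⟩ := hroot w' hw'
      have heq : C (w - w') * s = C ((r - C w' * s).coeff 0) - C c := by
        rw [map_sub, ← hcw', ← hcw]; ring
      have hd := congrArg natDegree heq
      rw [natDegree_C_mul (sub_ne_zero.mpr (fun e => hne e.symm)), ← C_sub, natDegree_C] at hd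
      omega
    have hqeq : q = (X - C w) ^ a := by
      have hsp : q.Splits := IsAlgClosed.splits q
      have hcard : q.roots.card = a := by
        rw [splits_iff_card_roots.mp hsp]; exact hdq
      have hrepl : q.roots = Multiset.replicate a w := by
        rw [Multiset.eq_replicate]
        refine ⟨hcard, fun x hx => ?_⟩
        exact huniq x ((mem_roots hq0).mp hx)
      calc q = (q.roots.map fun z => X - C z).prod :=
            (hsp.eq_prod_roots_of_monic hqm)
        _ = (X - C w) ^ a := by
            rw [hrepl, Multiset.map_replicate, Multiset.prod_replicate]
    have hfs : f₂ * A s = A r := by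
      rw [← hf₂, div_mul_cancel₀ _ (RatFunc.algebraMap_ne_zero hs0)]
    have hQ : phom q r s a = C c ^ a := by
      apply hAinj
      rw [← h2, hqeq, map_pow, map_sub, aeval_X, aeval_C, ← mul_pow]
      have : (f₂ - algebraMap ℂ (RatFunc ℂ) w) * A s = A (r - C w * s) := by
        rw [sub_mul, hfs, hCmap, ← map_mul, ← map_sub]
      rw [this, hcw, ← map_pow]
    have keyF : F * C c ^ a = phom p r s a := by rw [← hQ]; exact keyP
    have hca : (c : ℂ) ^ a ≠ 0 := pow_ne_zero _ hc0
    set hh : Polynomial ℂ :=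
      ∑ i ∈ Finset.range (a+1), C (p.coeff i * (c ^ a)⁻¹) * (C w * X + C c)^i * X^(a-i)
      with hhdef
    have hrs : C w * s + C c = r := by rw [← hcw]; ring
    have hcomp2 : hh.comp s = C ((c ^ a)⁻¹) * phom p r s a := by
      rw [hhdef]
      rw [Polynomial.comp, eval₂_finset_sum]
      simp only [eval₂_mul, eval₂_pow, eval₂_add, eval₂_C, eval₂_X]
      rw [phom, Finset.mul_sum]
      refine Finset.sum_congr rfl fun i hi => ?_
      rw [hrs, C_mul]
      ring
    have hFh : F = hh.comp s := by
      apply mul_right_cancel₀ (a := F) (b := C c ^ a) (by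
        intro e
        exact hca (by simpa using congrArg (Polynomial.eval 0) e))
      rw [keyF, hcomp2, mul_comm (C ((c ^ a)⁻¹)) (phom p r s a), mul_assoc, ← C_pow, ← C_mul,
        inv_mul_cancel₀ hca, map_one, mul_one]
    have hcoeff : hh.coeff a = p.eval w * (c ^ a)⁻¹ := by
      rw [hhdef, finset_sum_coeff]
      have hterm : ∀ i ∈ Finset.range (a+1),
          (C (p.coeff i * (c ^ a)⁻¹) * (C w * X + C c)^i * X^(a-i)).coeff a
            = p.coeff i * w ^ i * (c ^ a)⁻¹ := by
        intro i hi
        rw [Finset.mem_range, Nat.lt_succ_iff] at hi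
        rw [coeff_mul_X_pow', if_pos (Nat.sub_le a i), Nat.sub_sub_self hi,
          coeff_C_mul, coeff_linear_pow]
        ring
      rw [Finset.sum_congr rfl hterm, ← Finset.sum_mul, eval_eq_sum_range' hNp]
    have hdegh : 2 ≤ hh.natDegree := by
      have hne : hh.coeff a ≠ 0 := by
        rw [hcoeff]
        exact mul_ne_zero (coprime_eval hcopq hw) (inv_ne_zero hca)
      have := le_natDegree_of_ne_zero hne
      omega
    have hdegs : 2 ≤ s.natDegree := by
      have hrle : r.natDegree ≤ s.natDegree := by
        rw [← hrs]
        refine le_trans (natDegree_add_le _ _) ?_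
        rw [natDegree_C]
        simpa using natDegree_C_mul_le w s
      have hbs : b = s.natDegree := by
        rw [hbmax]
        exact max_eq_right hrle
      omega
    have hcc := crit_count hh s hdegh hdegs
    rw [← hFh, hdeg, hps] at hcc
    omega
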